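/- Let h ∈ I_ℓ(R). (1) If h fixes some x_{n_0} (i.e. x_{n_0} ∈ dom h and h x_{n_0} = x_{n_0}) and dom h contains x_{n_1} for some n_1 ≠ n_0, then x_n ∈ dom h and h x_n = x_n for all n ∈ ℤ. (2) If z is a generator of R, h fixes the element x_{n_0} z, and dom h contains x_{n_1} z for some n_1 ≠ n_0, then h fixes the constructible right ideal ⋃_{n ∈ ℤ, w' ∈ R ∖ {e}} x_n w' R pointwise. -/

import Mathlib

open scoped Classical

namespace SgC

variable {M : Type*}

/-- Composition of partial maps (`g` after `f`). -/
def pcomp (g f : M → Option M) : M → Option M := fun s => (f s).bind g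

/-- The canonical partial inverse of a partial map (the genuine inverse when the map
is injective on its domain, as is the case for all maps in the left inverse hull of a
left cancellative monoid). -/
noncomputable def pinv (f : M → Option M) : M → Option M :=
  fun t => if h : ∃ s, f s = some t then some h.choose else none

/-- Left translation `t ↦ s * t` as an everywhere-defined partial map. -/
def ptransl [Mul M] (s : M) : M → Option M := fun t => some (s * t)

/-- The identity partial map. -/
def pid : M → Option M := fun s => some s

/-- The block `q⁻¹ ∘ p`: first multiply on the left by `p`, then remove `q` on the left. -/
noncomputable def pblock [Mul M] (p : M × M) : M → Option M :=
  pcomp (pinv (ptransl p.2)) (ptransl p.1)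

/-- Membership in the left inverse hull `I_ℓ(M)`: `h` is of the form
`s₂ₙ⁻¹ s₂ₙ₋₁ ⋯ s₂⁻¹ s₁` for some `n ≥ 1` and `sᵢ ∈ M` (the list records the pairs
`(s₁,s₂), (s₃,s₄), …`, applied left to right). -/
def InInvHull [Mul M] (h : M → Option M) : Prop :=
  ∃ l : List (M × M), l ≠ [] ∧
    h = l.foldl (fun acc p => pcomp (pblock p) acc) pid

/-- Membership in the inverse hull generated by translations by elements of `σ` only
(used for canonical copies of `I_ℓ(S)` inside partial maps of a larger monoid). -/
def InInvHullOn [Mul M] (σ : Set M) (h : M → Option M) : Prop :=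
  ∃ l : List (M × M), l ≠ [] ∧ (∀ p ∈ l, p.1 ∈ σ ∧ p.2 ∈ σ) ∧
    h = l.foldl (fun acc p => pcomp (pblock p) acc) pid

/-- Domain of a partial map. -/
def pdom (h : M → Option M) : Set M := {s | h s ≠ none}

/-- `h` fixes the set `Y` pointwise (in particular `Y ⊆ dom h`). -/
def PFixes (h : M → Option M) (Y : Set M) : Prop := ∀ s ∈ Y, h s = some s

/-- Preimage of a set under a partial map. -/
def ppre (h : M → Option M) (X : Set M) : Set M := {s | ∃ x ∈ X, h s = some x}

/-- Constructible right ideals: domains of elements of the left inverse hull. -/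
def IsConstructible [Mul M] (X : Set M) : Prop := ∃ h, InInvHull h ∧ X = pdom h

/-- Membership in `J̄(S)`: sets of the form `X₀` or `X₀ ∖ (X₁ ∪ ⋯ ∪ Xₘ)` with all
`Xᵢ` constructible. -/
def IsConstructibleBar [Mul M] (X : Set M) : Prop :=
  ∃ (X₀ : Set M) (m : ℕ) (Xi : Fin m → Set M),
    IsConstructible X₀ ∧ (∀ i, IsConstructible (Xi i)) ∧ X = X₀ \ ⋃ i, Xi i

/-- `Xi` is a foundation family for `X`: each `Xi i ⊆ X` and every nonempty
constructible right ideal contained in `X` intersects some `Xi i`. -/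
def IsFoundation [Mul M] (X : Set M) {ι : Type*} (Xi : ι → Set M) : Prop :=
  (∀ i, Xi i ⊆ X) ∧
  ∀ Y : Set M, IsConstructible Y → Y.Nonempty → Y ⊆ X → ∃ i, (Y ∩ Xi i).Nonempty

/-- Strong C*-regularity. -/
def StronglyRegular (M : Type*) [Monoid M] : Prop :=
  ∀ (n : ℕ) (h : Fin n → M → Option M), (∀ k, InInvHull (h k)) →
  ∀ (m : ℕ) (X : Set M) (Xi : Fin m → Set M),
    IsConstructible X → (∀ i, IsConstructible (Xi i)) →
    (X \ ⋃ i, Xi i).Nonempty →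
    (X \ ⋃ i, Xi i) ⊆ ⋃ k, {s | h k s = some s} →
    ∃ (l : ℕ) (Y : Fin l → Set M) (kk : Fin l → Fin n),
      (∀ j, IsConstructible (Y j)) ∧
      (X \ ⋃ i, Xi i) ⊆ ⋃ j, Y j ∧
      ∀ j, PFixes (h (kk j)) (Y j)

/-- C*-regularity. -/
def Regular (M : Type*) [Monoid M] : Prop :=
  ∀ (n : ℕ) (h : Fin n → M → Option M), (∀ k, InInvHull (h k)) →
  ∀ X : Set M, IsConstructibleBar X → X.Nonempty →
    X ⊆ ⋃ k, {s | h k s = some s} →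
    ∃ (l : ℕ) (Y : Fin l → Set M) (kk : Fin l → Fin n),
      (∀ j, IsConstructibleBar (Y j)) ∧ X ⊆ ⋃ j, Y j ∧
      ∀ j, PFixes (h (kk j)) (Y j)

/-- Strong C*-regularity on the boundary. -/
def StronglyRegularOnBoundary (M : Type*) [Monoid M] : Prop :=
  ∀ (n : ℕ) (h : Fin n → M → Option M), (∀ k, InInvHull (h k)) →
  ∀ (m : ℕ) (X : Set M) (Xi : Fin m → Set M),
    IsConstructible X → (∀ i, IsConstructible (Xi i)) → (∀ i, Xi i ⊆ X) →
    (X \ ⋃ i, Xi i).Nonempty →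
    (X \ ⋃ i, Xi i) ⊆ ⋃ k, {s | h k s = some s} →
    ∃ (l : ℕ) (Y : Fin l → Set M) (kk : Fin l → Fin n),
      (∀ j, IsConstructible (Y j)) ∧ (∀ j, PFixes (h (kk j)) (Y j)) ∧
      IsFoundation X (Sum.elim Xi Y)

/-- C*-regularity on the boundary. -/
def RegularOnBoundary (M : Type*) [Monoid M] : Prop :=
  ∀ (n : ℕ) (h : Fin n → M → Option M), (∀ k, InInvHull (h k)) →
  ∀ (m : ℕ) (X : Set M) (Xi : Fin m → Set M),
    IsConstructible X → (∀ i, IsConstructible (Xi i)) → (∀ i, Xi i ⊆ X) →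
    (X \ ⋃ i, Xi i).Nonempty →
    (X \ ⋃ i, Xi i) ⊆ ⋃ k, {s | h k s = some s} →
    ∃ (l : ℕ) (Y : Fin l → Set M) (kk : Fin l → Fin n),
      (∀ j, IsConstructibleBar (Y j)) ∧ (∀ j, PFixes (h (kk j)) (Y j)) ∧
      IsFoundation X (Sum.elim Xi Y)

/-- The type of constructible right ideals `J(M)`. -/
def CIdeal (M : Type*) [Mul M] : Type _ := {X : Set M // IsConstructible X}

/-- The character space `{0,1}^{J(M)}` with the topology of pointwise convergence. -/
abbrev CharSpace (M : Type*) [Mul M] : Type _ := CIdeal M → Bool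

/-- The principal character `χ_s`. -/
noncomputable def princhar [Mul M] (s : M) : CharSpace M :=
  fun X => decide (s ∈ X.1)

/-- `Ω(M)`: the closure of the set of principal characters. -/
noncomputable def Omega (M : Type*) [Mul M] : Set (CharSpace M) :=
  closure (Set.range (princhar : M → CharSpace M))

/-- Filters on `J(M)`: nonempty collections of nonempty constructible ideals closed
under intersections and enlargements within `J(M)`. -/
def IsFilterOn [Mul M] (F : Set (CIdeal M)) : Prop :=
  F.Nonempty ∧ (∀ X ∈ F, (X.1 : Set M).Nonempty) ∧
  (∀ X ∈ F, ∀ Y ∈ F, ∀ Z : CIdeal M, Z.1 = X.1 ∩ Y.1 → Z ∈ F) ∧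
  (∀ X ∈ F, ∀ Y : CIdeal M, X.1 ⊆ Y.1 → Y ∈ F)

/-- Nonzero multiplicative `{0,1}`-valued maps on `J(M)`. -/
def IsChar [Mul M] (χ : CharSpace M) : Prop :=
  (∃ X, χ X = true) ∧
  ∀ X Y Z : CIdeal M, Z.1 = X.1 ∩ Y.1 → χ Z = (χ X && χ Y)

/-- Maximal characters: characters whose associated filter is maximal among filters. -/
def IsMaximalChar [Mul M] (χ : CharSpace M) : Prop :=
  IsChar χ ∧ IsFilterOn {X | χ X = true} ∧
  ∀ G : Set (CIdeal M), IsFilterOn G → {X | χ X = true} ⊆ G → G = {X | χ X = true}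

/-- The set of maximal characters `Ω_max(M)`. -/
def OmegaMax (M : Type*) [Mul M] : Set (CharSpace M) := {χ | IsMaximalChar χ}

/-- The boundary `∂Ω(M)`: the closure of the set of maximal characters. -/
noncomputable def BoundaryOmega (M : Type*) [Mul M] : Set (CharSpace M) :=
  closure (OmegaMax M)


/-! ### The monoid `R` -/

/-- Generators of the monoid `R`. -/
inductive Gen : Type
  | a : Gen
  | b : Gen
  | c : Gen
  | d : Gen
  | f : Gen
  | x : ℤ → Gen
  | y : ℤ → Gen

/-- The defining relations of the monoid `R`. -/
inductive RRel : FreeMonoid Gen → FreeMonoid Gen → Prop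
  | abx (n : ℤ) : RRel (FreeMonoid.of Gen.a * FreeMonoid.of Gen.b * FreeMonoid.of (Gen.x n))
      (FreeMonoid.of Gen.b * FreeMonoid.of (Gen.x n))
  | aby (n : ℤ) : RRel (FreeMonoid.of Gen.a * FreeMonoid.of Gen.b * FreeMonoid.of (Gen.y n))
      (FreeMonoid.of Gen.b * FreeMonoid.of (Gen.y (n + 1)))
  | cbx (n : ℤ) : RRel (FreeMonoid.of Gen.c * FreeMonoid.of Gen.b * FreeMonoid.of (Gen.x n))
      (FreeMonoid.of Gen.b * FreeMonoid.of (Gen.x (n + 1)))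
  | cby (n : ℤ) : RRel (FreeMonoid.of Gen.c * FreeMonoid.of Gen.b * FreeMonoid.of (Gen.y n))
      (FreeMonoid.of Gen.b * FreeMonoid.of (Gen.y n))
  | dbx (n : ℤ) (z : Gen) :
      RRel (FreeMonoid.of Gen.d * FreeMonoid.of Gen.b * FreeMonoid.of (Gen.x n) * FreeMonoid.of z)
        (FreeMonoid.of Gen.b * FreeMonoid.of (Gen.x n) * FreeMonoid.of z)
  | fby (n : ℤ) (z : Gen) :
      RRel (FreeMonoid.of Gen.f * FreeMonoid.of Gen.b * FreeMonoid.of (Gen.y n) * FreeMonoid.of z)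
        (FreeMonoid.of Gen.b * FreeMonoid.of (Gen.y n) * FreeMonoid.of z)

/-- The monoid `R`: the quotient of the free monoid on the generators by the congruence
generated by the defining relations. -/
def R : Type := (conGen RRel).Quotient

noncomputable instance : Monoid R := inferInstanceAs (Monoid (conGen RRel).Quotient)

/-- The quotient map from the free monoid on the generators onto `R`. -/
def qR : FreeMonoid Gen →* R := Con.mk' _

/-- The image in `R` of a generator. -/
noncomputable def gen (g : Gen) : R := qR (FreeMonoid.of g)

/-- A word contains a forbidden factor. -/
def IsForbidden (w : FreeMonoid Gen) : Prop :=
  ∃ n : ℤ,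
    w = FreeMonoid.of Gen.a * FreeMonoid.of Gen.b * FreeMonoid.of (Gen.x n) ∨
    w = FreeMonoid.of Gen.a * FreeMonoid.of Gen.b * FreeMonoid.of (Gen.y n) ∨
    w = FreeMonoid.of Gen.c * FreeMonoid.of Gen.b * FreeMonoid.of (Gen.x n) ∨
    w = FreeMonoid.of Gen.c * FreeMonoid.of Gen.b * FreeMonoid.of (Gen.y n) ∨
    w = FreeMonoid.of Gen.d * FreeMonoid.of Gen.b * FreeMonoid.of (Gen.x n) ∨
    w = FreeMonoid.of Gen.f * FreeMonoid.of Gen.b * FreeMonoid.of (Gen.y n)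

/-- A word is reduced if it contains no forbidden factor. -/
def ReducedWord (u : FreeMonoid Gen) : Prop :=
  ¬ ∃ p w s : FreeMonoid Gen, IsForbidden w ∧ u = p * w * s

/-- The prefix word `w₁ w₂ ⋯ wₙ` of an infinite word. -/
def prefixWord (w : ℕ → Gen) (n : ℕ) : FreeMonoid Gen :=
  FreeMonoid.ofList ((List.range n).map w)


/-! ### Normal form machinery for `R` -/

abbrev GW := List Gen

def mA : GW → GW
  | .b :: .x n :: t => .b :: .x n :: t
  | .b :: .y n :: t => .b :: .y (n+1) :: t
  | l => .a :: l

def mC : GW → GW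
  | .b :: .x n :: t => .b :: .x (n+1) :: t
  | .b :: .y n :: t => .b :: .y n :: t
  | l => .c :: l

def mD : GW → GW
  | .b :: .x n :: z :: t => .b :: .x n :: z :: t
  | l => .d :: l

def mF : GW → GW
  | .b :: .y n :: z :: t => .b :: .y n :: z :: t
  | l => .f :: l

def mulG : Gen → GW → GW
  | .a => mA
  | .c => mC
  | .d => mD
  | .f => mF
  | g => fun l => g :: l

lemma mulG_b (l : GW) : mulG .b l = .b :: l := rfl
lemma mulG_x (n : ℤ) (l : GW) : mulG (.x n) l = .x n :: l := rfl
lemma mulG_y (n : ℤ) (l : GW) : mulG (.y n) l = .y n :: l := rfl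

lemma mulG_ne_nil (g : Gen) (l : GW) : mulG g l ≠ [] := by
  cases g <;>
    first
    | exact List.cons_ne_nil _ _
    | · rcases l with _ | ⟨_ | _ | _ | _ | _ | n | n, _ | ⟨_ | _ | _ | _ | _ | m | m, _ | ⟨g2, t⟩⟩⟩ <;>
        simp [mulG, mA, mC, mD, mF]

def act (Q l : GW) : GW := Q.foldr mulG l

lemma act_nil (l : GW) : act [] l = l := rfl
lemma act_cons (g : Gen) (Q l : GW) : act (g :: Q) l = mulG g (act Q l) := rfl

def phiF : FreeMonoid Gen →* Function.End GW := FreeMonoid.lift (fun g => mulG g)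

lemma phiF_of (g : Gen) (l : GW) : phiF (FreeMonoid.of g) l = mulG g l := by
  have hl := FreeMonoid.lift_eval_of (M := Function.End GW) (fun g => mulG g) g
  exact congrArg (fun (F : Function.End GW) => F l) hl

lemma phiF_mul_apply (u v : FreeMonoid Gen) (l : GW) :
    phiF (u * v) l = phiF u (phiF v l) := by
  rw [map_mul]; rfl

lemma phiF_rel : ∀ w w', RRel w w' → phiF w = phiF w' := by
  intro w w' h
  cases h with
  | abx n => funext l; simp only [phiF_mul_apply, phiF_of]; rfl
  | aby n => funext l; simp only [phiF_mul_apply, phiF_of]; rfl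
  | cbx n => funext l; simp only [phiF_mul_apply, phiF_of]; rfl
  | cby n => funext l; simp only [phiF_mul_apply, phiF_of]; rfl
  | dbx n z =>
      funext l; simp only [phiF_mul_apply, phiF_of]
      rcases hz : mulG z l with _ | ⟨z', t⟩
      · exact absurd hz (mulG_ne_nil z l)
      · rfl
  | fby n z =>
      funext l; simp only [phiF_mul_apply, phiF_of]
      rcases hz : mulG z l with _ | ⟨z', t⟩
      · exact absurd hz (mulG_ne_nil z l)
      · rfl

noncomputable def PhiR : R →* Function.End GW :=
  Con.lift _ phiF (Con.conGen_le.2 (fun x y h => (Con.ker_rel _).2 (phiF_rel x y h)))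

noncomputable def NF (r : R) : GW := PhiR r []

lemma PhiR_qR (w : FreeMonoid Gen) : PhiR (qR w) = phiF w := rfl

lemma phiF_ofList (m l : GW) : phiF (FreeMonoid.ofList m) l = act m l := by
  induction m with
  | nil => rfl
  | cons g m ih =>
      have : FreeMonoid.ofList (g :: m) = FreeMonoid.of g * FreeMonoid.ofList m := rfl
      rw [this, phiF_mul_apply, ih, phiF_of]; rfl

lemma qR_cons (g : Gen) (l : GW) :
    qR (FreeMonoid.ofList (g :: l)) = gen g * qR (FreeMonoid.ofList l) := by
  have : FreeMonoid.ofList (g :: l) = FreeMonoid.of g * FreeMonoid.ofList l := rfl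
  rw [this, map_mul]; rfl

lemma qR_rrel {w w' : FreeMonoid Gen} (h : ConGen.Rel RRel w w') : qR w = qR w' :=
  (Con.eq _).2 h

lemma mulG_sec (g : Gen) (l : GW) :
    qR (FreeMonoid.ofList (mulG g l)) = gen g * qR (FreeMonoid.ofList l) := by
  have key : ∀ (g : Gen) (l : GW), mulG g l = g :: l ∨
      qR (FreeMonoid.ofList (g :: l)) = qR (FreeMonoid.ofList (mulG g l)) := by
    intro g l
    cases g <;> try (exact Or.inl rfl)
    · -- a
      rcases l with _ | ⟨_ | _ | _ | _ | _ | n | n, _ | ⟨_ | _ | _ | _ | _ | m | m, t⟩⟩ <;>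
        try (exact Or.inl rfl)
      · exact Or.inr (qR_rrel (ConGen.Rel.mul
          (ConGen.Rel.of _ _ (RRel.abx m)) (ConGen.Rel.refl (FreeMonoid.ofList t))))
      · exact Or.inr (qR_rrel (ConGen.Rel.mul
          (ConGen.Rel.of _ _ (RRel.aby m)) (ConGen.Rel.refl (FreeMonoid.ofList t))))
    · -- c
      rcases l with _ | ⟨_ | _ | _ | _ | _ | n | n, _ | ⟨_ | _ | _ | _ | _ | m | m, t⟩⟩ <;>
        try (exact Or.inl rfl)
      · exact Or.inr (qR_rrel (ConGen.Rel.mul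
          (ConGen.Rel.of _ _ (RRel.cbx m)) (ConGen.Rel.refl (FreeMonoid.ofList t))))
      · exact Or.inr (qR_rrel (ConGen.Rel.mul
          (ConGen.Rel.of _ _ (RRel.cby m)) (ConGen.Rel.refl (FreeMonoid.ofList t))))
    · -- d
      rcases l with _ | ⟨_ | _ | _ | _ | _ | n | n, _ | ⟨_ | _ | _ | _ | _ | m | m, _ | ⟨g2, t⟩⟩⟩ <;>
        try (exact Or.inl rfl)
      · exact Or.inr (qR_rrel (ConGen.Rel.mul
          (ConGen.Rel.of _ _ (RRel.dbx m g2)) (ConGen.Rel.refl (FreeMonoid.ofList t))))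
    · -- f
      rcases l with _ | ⟨_ | _ | _ | _ | _ | n | n, _ | ⟨_ | _ | _ | _ | _ | m | m, _ | ⟨g2, t⟩⟩⟩ <;>
        try (exact Or.inl rfl)
      · exact Or.inr (qR_rrel (ConGen.Rel.mul
          (ConGen.Rel.of _ _ (RRel.fby m g2)) (ConGen.Rel.refl (FreeMonoid.ofList t))))
  rcases key g l with h | h
  · rw [h, qR_cons]
  · rw [← h, qR_cons]

lemma secA (m l : GW) :
    qR (FreeMonoid.ofList (act m l)) = qR (FreeMonoid.ofList m) * qR (FreeMonoid.ofList l) := by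
  induction m with
  | nil =>
      show qR (FreeMonoid.ofList l) = qR 1 * qR (FreeMonoid.ofList l)
      rw [map_one, one_mul]
  | cons g m ih =>
      rw [act_cons, mulG_sec, ih, qR_cons, mul_assoc]

lemma NF_qR (l : GW) : NF (qR (FreeMonoid.ofList l)) = act l [] := by
  unfold NF
  rw [PhiR_qR]
  exact phiF_ofList l []

lemma retr (r : R) : qR (FreeMonoid.ofList (NF r)) = r := by
  obtain ⟨w, rfl⟩ := Con.mk'_surjective (c := conGen RRel) r
  have hw : (w : FreeMonoid Gen) = FreeMonoid.ofList (FreeMonoid.toList w) :=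
    (FreeMonoid.ofList_toList w).symm
  show qR (FreeMonoid.ofList (NF (qR w))) = qR w
  rw [hw, NF_qR, secA]
  have : qR (FreeMonoid.ofList ([] : GW)) = 1 := rfl
  rw [this, mul_one]

lemma NF_inj {r r' : R} (h : NF r = NF r') : r = r' := by
  rw [← retr r, ← retr r', h]

lemma PhiR_eq_act (r : R) (l : GW) : PhiR r l = act (NF r) l := by
  conv_lhs => rw [← retr r]
  rw [PhiR_qR, phiF_ofList]

lemma NF_mul (r r' : R) : NF (r * r') = act (NF r) (NF r') := by
  show PhiR (r * r') [] = _
  rw [map_mul]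
  show PhiR r (PhiR r' []) = _
  rw [PhiR_eq_act]; rfl

lemma mulElem (r : R) (W : GW) :
    r * qR (FreeMonoid.ofList W) = qR (FreeMonoid.ofList (act (NF r) W)) := by
  rw [secA, retr]

/-! injectivity of `mulG` -/

def invA : GW → GW
  | .a :: l => l
  | .b :: .x n :: t => .b :: .x n :: t
  | .b :: .y n :: t => .b :: .y (n-1) :: t
  | l => l

def invC : GW → GW
  | .c :: l => l
  | .b :: .x n :: t => .b :: .x (n-1) :: t
  | .b :: .y n :: t => .b :: .y n :: t
  | l => l

def invD : GW → GW
  | .d :: l => l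
  | l => l

def invF : GW → GW
  | .f :: l => l
  | l => l

lemma mulG_inj (g : Gen) : Function.Injective (mulG g) := by
  cases g
  case b => intro u v h; injection h
  case x n => intro u v h; injection h
  case y n => intro u v h; injection h
  case a =>
    have key : ∀ l, invA (mulG .a l) = l := by
      intro l
      rcases l with _ | ⟨_ | _ | _ | _ | _ | n | n, _ | ⟨_ | _ | _ | _ | _ | m | m, t⟩⟩ <;>
        simp [mulG, mA, invA]
    intro u v h
    rw [← key u, ← key v, h]
  case c =>
    have key : ∀ l, invC (mulG .c l) = l := by
      intro l
      rcases l with _ | ⟨_ | _ | _ | _ | _ | n | n, _ | ⟨_ | _ | _ | _ | _ | m | m, t⟩⟩ <;>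
        simp [mulG, mC, invC]
    intro u v h
    rw [← key u, ← key v, h]
  case d =>
    have key : ∀ l, invD (mulG .d l) = l := by
      intro l
      rcases l with _ | ⟨_ | _ | _ | _ | _ | n | n, _ | ⟨_ | _ | _ | _ | _ | m | m, _ | ⟨g2, t⟩⟩⟩ <;>
        simp [mulG, mD, invD]
    intro u v h
    rw [← key u, ← key v, h]
  case f =>
    have key : ∀ l, invF (mulG .f l) = l := by
      intro l
      rcases l with _ | ⟨_ | _ | _ | _ | _ | n | n, _ | ⟨_ | _ | _ | _ | _ | m | m, _ | ⟨g2, t⟩⟩⟩ <;>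
        simp [mulG, mF, invF]
    intro u v h
    rw [← key u, ← key v, h]

lemma act_inj (Q : GW) : Function.Injective (act Q) := by
  induction Q with
  | nil => intro u v h; exact h
  | cons g Q ih => intro u v h; exact ih (mulG_inj g h)

lemma left_cancel {a : R} {b c : R} (h : a * b = a * c) : b = c := by
  apply NF_inj
  have := congrArg NF h
  rw [NF_mul, NF_mul] at this
  exact act_inj (NF a) this

/-! ### Semantics of the inverse hull elements -/

inductive Runs : List (R × R) → R → R → Prop
  | nil (s : R) : Runs [] s s
  | cons {p q u s t : R} {l : List (R × R)} :
      q * u = p * s → Runs l u t → Runs ((p, q) :: l) s t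

lemma pinv_transl_some {q v u : R} : pinv (ptransl q) v = some u ↔ q * u = v := by
  constructor
  · intro h
    unfold pinv at h
    by_cases hex : ∃ s, ptransl q s = some v
    · rw [dif_pos hex] at h
      injection h with h
      have hc : some (q * hex.choose) = some v := hex.choose_spec
      injection hc with hc
      rw [← h]; exact hc
    · rw [dif_neg hex] at h; cases h
  · intro h
    unfold pinv
    have hex : ∃ s, ptransl q s = some v := ⟨u, by simp [ptransl, h]⟩
    rw [dif_pos hex]
    have hc : some (q * hex.choose) = some v := hex.choose_spec
    injection hc with hc
    exact congrArg some (left_cancel (hc.trans h.symm))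

lemma pblock_some {p q v u : R} : pblock (p, q) v = some u ↔ q * u = p * v := by
  have h0 : pblock (p, q) v = pinv (ptransl q) (p * v) := rfl
  rw [h0, pinv_transl_some]

lemma foldl_some (l : List (R × R)) :
    ∀ (acc : R → Option R) (s t : R),
      (l.foldl (fun acc p => pcomp (pblock p) acc) acc) s = some t ↔
        ∃ u, acc s = some u ∧ Runs l u t := by
  induction l with
  | nil =>
      intro acc s t
      simp only [List.foldl_nil]
      constructor
      · intro h; exact ⟨t, h, Runs.nil t⟩
      · rintro ⟨u, hu, hr⟩; cases hr; exact hu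
  | cons pr l ih =>
      intro acc s t
      obtain ⟨p, q⟩ := pr
      simp only [List.foldl_cons]
      rw [ih]
      constructor
      · rintro ⟨u, hu, hr⟩
        simp only [pcomp] at hu
        rcases hacc : acc s with _ | v
        · rw [hacc] at hu; exact absurd hu (by simp [Option.bind])
        · rw [hacc] at hu
          simp only [Option.bind] at hu
          exact ⟨v, rfl, Runs.cons (pblock_some.1 hu) hr⟩
      · rintro ⟨v, hv, hr⟩
        cases hr with
        | @cons p2 q2 u2 s2 t2 l2 hq hr' =>
            exact ⟨u2, by simp only [pcomp, hv, Option.bind]; exact pblock_some.2 hq, hr'⟩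

lemma hull_some {h : R → Option R} {l : List (R × R)}
    (hl : h = l.foldl (fun acc p => pcomp (pblock p) acc) pid) (s t : R) :
    h s = some t ↔ Runs l s t := by
  rw [hl, foldl_some]
  constructor
  · rintro ⟨u, hu, hr⟩
    simp only [pid, Option.some.injEq] at hu
    rwa [hu]
  · intro hr; exact ⟨s, rfl, hr⟩

lemma runs_back_inj {l : List (R × R)} {u v t : R}
    (h1 : Runs l u t) (h2 : Runs l v t) : u = v := by
  induction l generalizing u v with
  | nil => cases h1; cases h2; rfl
  | cons pr l ih =>
      cases h1 with
      | cons hq1 hr1 =>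
          cases h2 with
          | cons hq2 hr2 =>
              have := ih hr1 hr2
              rw [this] at hq1
              exact left_cancel (hq1.symm.trans hq2)

/-! ### Marked words and index genericity -/

abbrev MG := Bool × Gen

def shiftG (t : ℤ) : Gen → Gen
  | .x n => .x (n + t)
  | .y n => .y (n + t)
  | g => g

def sub (t : ℤ) (p : MG) : Gen := if p.1 then shiftG t p.2 else p.2

def S (t : ℤ) (ρ : List MG) : GW := ρ.map (sub t)

def isXY : Gen → Prop := fun g => ∃ n, g = .x n ∨ g = .y n

def Mk (ρ : List MG) : Prop := ∃ p ∈ ρ, p.1 = true ∧ isXY p.2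

lemma sub_nonxy {t : ℤ} {m : Bool} {g : Gen} (h : ¬ isXY g) : sub t (m, g) = g := by
  cases m
  · rfl
  · cases g
    case x n => exact absurd ⟨n, Or.inl rfl⟩ h
    case y n => exact absurd ⟨n, Or.inr rfl⟩ h
    all_goals rfl

lemma sub_b {t : ℤ} {m : Bool} : sub t (m, .b) = .b := by cases m <;> rfl

lemma S_nil (t : ℤ) : S t [] = [] := rfl
lemma S_cons (t : ℤ) (p : MG) (ρ : List MG) : S t (p :: ρ) = sub t p :: S t ρ := rfl

lemma Mk_cons {p : MG} {ρ : List MG} : Mk (p :: ρ) ↔ (p.1 = true ∧ isXY p.2) ∨ Mk ρ := by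
  constructor
  · rintro ⟨q, hq, hm⟩
    rcases List.mem_cons.1 hq with h | h
    · exact Or.inl (h ▸ hm)
    · exact Or.inr ⟨q, h, hm⟩
  · rintro (h | ⟨q, hq, hm⟩)
    · exact ⟨p, List.mem_cons_self, h⟩
    · exact ⟨q, List.mem_cons_of_mem _ hq, hm⟩

lemma not_Mk_nil : ¬ Mk [] := by rintro ⟨p, hp, -⟩; cases hp

lemma mk_of_ne {ρ : List MG} {t t' : ℤ} (h : S t ρ ≠ S t' ρ) : Mk ρ := by
  induction ρ with
  | nil => exact absurd rfl h
  | cons p ρ ih =>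
      by_cases hx : p.1 = true ∧ isXY p.2
      · exact Mk_cons.2 (Or.inl hx)
      · have hp : sub t p = sub t' p := by
          by_cases hm : p.1 = true
          · have hxy : ¬ isXY p.2 := fun hy => hx ⟨hm, hy⟩
            obtain ⟨m, g⟩ := p
            rw [sub_nonxy hxy, sub_nonxy hxy]
          · obtain ⟨m, g⟩ := p
            simp only [Bool.not_eq_true] at hm
            subst hm; rfl
        refine Mk_cons.2 (Or.inr (ih fun hr => h ?_))
        rw [S_cons, S_cons, hp, hr]

lemma sub_zero (p : MG) : sub 0 p = p.2 := by
  obtain ⟨m, g⟩ := p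
  cases m
  · rfl
  · cases g <;> simp [sub, shiftG]

lemma sub_x (t : ℤ) (m : Bool) (n : ℤ) : sub t (m, .x n) = .x (n + cond m t 0) := by
  cases m <;> simp [sub, shiftG]

lemma sub_y (t : ℤ) (m : Bool) (n : ℤ) : sub t (m, .y n) = .y (n + cond m t 0) := by
  cases m <;> simp [sub, shiftG]

lemma sub_eq_b {t : ℤ} {p : MG} (h : sub t p = .b) : p.2 = .b := by
  obtain ⟨m, g⟩ := p; cases m <;> cases g <;> simp_all [sub, shiftG]

lemma sub_eq_a {t : ℤ} {p : MG} (h : sub t p = .a) : p.2 = .a := by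
  obtain ⟨m, g⟩ := p; cases m <;> cases g <;> simp_all [sub, shiftG]

lemma sub_eq_c {t : ℤ} {p : MG} (h : sub t p = .c) : p.2 = .c := by
  obtain ⟨m, g⟩ := p; cases m <;> cases g <;> simp_all [sub, shiftG]

lemma sub_eq_d {t : ℤ} {p : MG} (h : sub t p = .d) : p.2 = .d := by
  obtain ⟨m, g⟩ := p; cases m <;> cases g <;> simp_all [sub, shiftG]

lemma sub_eq_f {t : ℤ} {p : MG} (h : sub t p = .f) : p.2 = .f := by
  obtain ⟨m, g⟩ := p; cases m <;> cases g <;> simp_all [sub, shiftG]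

lemma sub_eq_x {t : ℤ} {p : MG} {n : ℤ} (h : sub t p = .x n) : ∃ n', p.2 = .x n' := by
  obtain ⟨m, g⟩ := p; cases m <;> cases g <;> simp_all [sub, shiftG] <;> exact ⟨_, rfl⟩

lemma sub_eq_y {t : ℤ} {p : MG} {n : ℤ} (h : sub t p = .y n) : ∃ n', p.2 = .y n' := by
  obtain ⟨m, g⟩ := p; cases m <;> cases g <;> simp_all [sub, shiftG] <;> exact ⟨_, rfl⟩

/-- The fixed suffix: `[z]` in the suffix regime (`em = true`), `[]` otherwise. -/
def sfx (em : Bool) (z : Gen) : GW := cond em [z] []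

lemma sfx_nil_iff (em : Bool) (z : Gen) : sfx em z = [] ↔ em = false := by
  cases em <;> simp [sfx]

/-! fire predicates -/

def fX (w : GW) : Prop := ∃ n t, w = .b :: .x n :: t
def fY (w : GW) : Prop := ∃ n t, w = .b :: .y n :: t
def fXz (w : GW) : Prop := ∃ n z' t, w = .b :: .x n :: z' :: t
def fYz (w : GW) : Prop := ∃ n z' t, w = .b :: .y n :: z' :: t

lemma mA_fX {w : GW} (h : fX w) : mA w = w := by
  obtain ⟨n, t, rfl⟩ := h; rfl

lemma mC_fY {w : GW} (h : fY w) : mC w = w := by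
  obtain ⟨n, t, rfl⟩ := h; rfl

lemma mD_fXz {w : GW} (h : fXz w) : mD w = w := by
  obtain ⟨n, z', t, rfl⟩ := h; rfl

lemma mF_fYz {w : GW} (h : fYz w) : mF w = w := by
  obtain ⟨n, z', t, rfl⟩ := h; rfl

lemma mA_nf {w : GW} (h1 : ¬ fX w) (h2 : ¬ fY w) : mA w = .a :: w := by
  rcases w with _ | ⟨_ | _ | _ | _ | _ | n | n, _ | ⟨_ | _ | _ | _ | _ | m | m, t⟩⟩ <;>
    first
    | rfl
    | exact (h1 ⟨_, _, rfl⟩).elim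
    | exact (h2 ⟨_, _, rfl⟩).elim

lemma mC_nf {w : GW} (h1 : ¬ fX w) (h2 : ¬ fY w) : mC w = .c :: w := by
  rcases w with _ | ⟨_ | _ | _ | _ | _ | n | n, _ | ⟨_ | _ | _ | _ | _ | m | m, t⟩⟩ <;>
    first
    | rfl
    | exact (h1 ⟨_, _, rfl⟩).elim
    | exact (h2 ⟨_, _, rfl⟩).elim

lemma mD_nf {w : GW} (h1 : ¬ fXz w) : mD w = .d :: w := by
  rcases w with _ | ⟨_ | _ | _ | _ | _ | n | n, _ | ⟨_ | _ | _ | _ | _ | m | m, _ | ⟨g2, t⟩⟩⟩ <;>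
    first
    | rfl
    | exact (h1 ⟨_, _, _, rfl⟩).elim

lemma mF_nf {w : GW} (h1 : ¬ fYz w) : mF w = .f :: w := by
  rcases w with _ | ⟨_ | _ | _ | _ | _ | n | n, _ | ⟨_ | _ | _ | _ | _ | m | m, _ | ⟨g2, t⟩⟩⟩ <;>
    first
    | rfl
    | exact (h1 ⟨_, _, _, rfl⟩).elim

/-! kind transfer lemmas -/

lemma fX_transfer {ρ : List MG} {t t' : ℤ} {r r' : GW}
    (hrr : r = [] ↔ r' = []) (hside : Mk ρ ∨ (r = [] ∧ r' = []))
    (h : fX (S t ρ ++ r)) : fX (S t' ρ ++ r') := by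
  obtain ⟨n, tt, hw⟩ := h
  rcases ρ with _ | ⟨p0, _ | ⟨p1, ρ2⟩⟩
  · -- word is r itself
    rcases hside with hM | ⟨h1, h2⟩
    · exact absurd hM not_Mk_nil
    · rw [h1] at hw; cases hw
  · -- singleton: second letter comes from r
    simp only [S_cons, S_nil, List.nil_append, List.cons_append] at hw
    injection hw with hb hr2
    rcases hside with hM | ⟨h1, h2⟩
    · rcases Mk_cons.1 hM with ⟨-, k, hk | hk⟩ | hM'
      · rw [sub_eq_b hb] at hk; cases hk
      · rw [sub_eq_b hb] at hk; cases hk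
      · exact absurd hM' not_Mk_nil
    · rw [h1] at hr2; cases hr2
  · simp only [S_cons, List.cons_append] at hw ⊢
    injection hw with hb hw; injection hw with hx hw
    obtain ⟨n', hn'⟩ := sub_eq_x hx
    refine ⟨n' + cond p1.1 t' 0, S t' ρ2 ++ r', ?_⟩
    have hb' : p0.2 = .b := sub_eq_b hb
    obtain ⟨m0, g0⟩ := p0; obtain ⟨m1, g1⟩ := p1
    simp only at hb' hn'
    subst hb'; subst hn'
    rw [sub_b, sub_x]

lemma fY_transfer {ρ : List MG} {t t' : ℤ} {r r' : GW}
    (hrr : r = [] ↔ r' = []) (hside : Mk ρ ∨ (r = [] ∧ r' = []))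
    (h : fY (S t ρ ++ r)) : fY (S t' ρ ++ r') := by
  obtain ⟨n, tt, hw⟩ := h
  rcases ρ with _ | ⟨p0, _ | ⟨p1, ρ2⟩⟩
  · rcases hside with hM | ⟨h1, h2⟩
    · exact absurd hM not_Mk_nil
    · rw [h1] at hw; cases hw
  · simp only [S_cons, S_nil, List.nil_append, List.cons_append] at hw
    injection hw with hb hr2
    rcases hside with hM | ⟨h1, h2⟩
    · rcases Mk_cons.1 hM with ⟨-, k, hk | hk⟩ | hM'
      · rw [sub_eq_b hb] at hk; cases hk
      · rw [sub_eq_b hb] at hk; cases hk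
      · exact absurd hM' not_Mk_nil
    · rw [h1] at hr2; cases hr2
  · simp only [S_cons, List.cons_append] at hw ⊢
    injection hw with hb hw; injection hw with hx hw
    obtain ⟨n', hn'⟩ := sub_eq_y hx
    refine ⟨n' + cond p1.1 t' 0, S t' ρ2 ++ r', ?_⟩
    have hb' : p0.2 = .b := sub_eq_b hb
    obtain ⟨m0, g0⟩ := p0; obtain ⟨m1, g1⟩ := p1
    simp only at hb' hn'
    subst hb'; subst hn'
    rw [sub_b, sub_y]

lemma fXz_transfer {ρ : List MG} {t t' : ℤ} {r r' : GW}
    (hrr : r = [] ↔ r' = []) (hside : Mk ρ ∨ (r = [] ∧ r' = []))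
    (h : fXz (S t ρ ++ r)) : fXz (S t' ρ ++ r') := by
  obtain ⟨n, z', tt, hw⟩ := h
  rcases ρ with _ | ⟨p0, _ | ⟨p1, ρ2⟩⟩
  · rcases hside with hM | ⟨h1, h2⟩
    · exact absurd hM not_Mk_nil
    · rw [h1] at hw; cases hw
  · simp only [S_cons, S_nil, List.nil_append, List.cons_append] at hw
    injection hw with hb hr2
    rcases hside with hM | ⟨h1, h2⟩
    · rcases Mk_cons.1 hM with ⟨-, k, hk | hk⟩ | hM'
      · rw [sub_eq_b hb] at hk; cases hk
      · rw [sub_eq_b hb] at hk; cases hk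
      · exact absurd hM' not_Mk_nil
    · rw [h1] at hr2; cases hr2
  · simp only [S_cons, List.cons_append] at hw ⊢
    injection hw with hb hw; injection hw with hx hw
    obtain ⟨n', hn'⟩ := sub_eq_x hx
    have hne : S t' ρ2 ++ r' ≠ [] := by
      rcases ρ2 with _ | ⟨p2, ρ3⟩
      · simp only [S_nil, List.nil_append] at hw ⊢
        intro hc
        rw [hrr.2 hc] at hw; cases hw
      · simp [S_cons]
    rcases hS : S t' ρ2 ++ r' with _ | ⟨z2, tt2⟩
    · exact absurd hS hne
    refine ⟨n' + cond p1.1 t' 0, z2, tt2, ?_⟩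
    have hb' : p0.2 = .b := sub_eq_b hb
    obtain ⟨m0, g0⟩ := p0; obtain ⟨m1, g1⟩ := p1
    simp only at hb' hn'
    subst hb'; subst hn'
    rw [sub_b, sub_x]

lemma fYz_transfer {ρ : List MG} {t t' : ℤ} {r r' : GW}
    (hrr : r = [] ↔ r' = []) (hside : Mk ρ ∨ (r = [] ∧ r' = []))
    (h : fYz (S t ρ ++ r)) : fYz (S t' ρ ++ r') := by
  obtain ⟨n, z', tt, hw⟩ := h
  rcases ρ with _ | ⟨p0, _ | ⟨p1, ρ2⟩⟩
  · rcases hside with hM | ⟨h1, h2⟩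
    · exact absurd hM not_Mk_nil
    · rw [h1] at hw; cases hw
  · simp only [S_cons, S_nil, List.nil_append, List.cons_append] at hw
    injection hw with hb hr2
    rcases hside with hM | ⟨h1, h2⟩
    · rcases Mk_cons.1 hM with ⟨-, k, hk | hk⟩ | hM'
      · rw [sub_eq_b hb] at hk; cases hk
      · rw [sub_eq_b hb] at hk; cases hk
      · exact absurd hM' not_Mk_nil
    · rw [h1] at hr2; cases hr2
  · simp only [S_cons, List.cons_append] at hw ⊢
    injection hw with hb hw; injection hw with hx hw
    obtain ⟨n', hn'⟩ := sub_eq_y hx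
    have hne : S t' ρ2 ++ r' ≠ [] := by
      rcases ρ2 with _ | ⟨p2, ρ3⟩
      · simp only [S_nil, List.nil_append] at hw ⊢
        intro hc
        rw [hrr.2 hc] at hw; cases hw
      · simp [S_cons]
    rcases hS : S t' ρ2 ++ r' with _ | ⟨z2, tt2⟩
    · exact absurd hS hne
    refine ⟨n' + cond p1.1 t' 0, z2, tt2, ?_⟩
    have hb' : p0.2 = .b := sub_eq_b hb
    obtain ⟨m0, g0⟩ := p0; obtain ⟨m1, g1⟩ := p1
    simp only at hb' hn'
    subst hb'; subst hn'
    rw [sub_b, sub_y]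

lemma sub_a (t : ℤ) (m : Bool) : sub t (m, .a) = .a := by cases m <;> rfl
lemma sub_c (t : ℤ) (m : Bool) : sub t (m, .c) = .c := by cases m <;> rfl
lemma sub_d (t : ℤ) (m : Bool) : sub t (m, .d) = .d := by cases m <;> rfl
lemma sub_f (t : ℤ) (m : Bool) : sub t (m, .f) = .f := by cases m <;> rfl

lemma mulG_a : mulG .a = mA := rfl
lemma mulG_c : mulG .c = mC := rfl
lemma mulG_d : mulG .d = mD := rfl
lemma mulG_f : mulG .f = mF := rfl

lemma not_isXY_b : ¬ isXY Gen.b := by rintro ⟨n, h | h⟩ <;> cases h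
lemma not_isXY_a : ¬ isXY Gen.a := by rintro ⟨n, h | h⟩ <;> cases h
lemma not_isXY_c : ¬ isXY Gen.c := by rintro ⟨n, h | h⟩ <;> cases h
lemma not_isXY_d : ¬ isXY Gen.d := by rintro ⟨n, h | h⟩ <;> cases h
lemma not_isXY_f : ¬ isXY Gen.f := by rintro ⟨n, h | h⟩ <;> cases h

/-- transfer side condition -/
lemma tside {em : Bool} {z : Gen} {ρ : List MG} {r : GW}
    (hMk : em = true → Mk ρ) (hr : r = [] ↔ em = false) :
    Mk ρ ∨ (sfx em z = [] ∧ r = []) := by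
  cases em
  · exact Or.inr ⟨rfl, hr.2 rfl⟩
  · exact Or.inl (hMk rfl)

lemma tside' {em : Bool} {z : Gen} {ρ : List MG} {r : GW}
    (hMk : em = true → Mk ρ) (hr : r = [] ↔ em = false) :
    Mk ρ ∨ (r = [] ∧ sfx em z = []) := by
  cases em
  · exact Or.inr ⟨hr.2 rfl, rfl⟩
  · exact Or.inl (hMk rfl)

lemma trr {em : Bool} {z : Gen} {r : GW} (hr : r = [] ↔ em = false) :
    sfx em z = [] ↔ r = [] := by
  rw [sfx_nil_iff, hr]

/-- Forward step: multiplying a marked word (with flexible suffix) by a generator. -/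
lemma stepF (g : Gen) (em : Bool) (z : Gen) (ρ : List MG)
    (hMk : em = true → Mk ρ) :
    ∃ ρ' : List MG, (Mk ρ → Mk ρ') ∧
      ∀ (t : ℤ) (r : GW), (r = [] ↔ em = false) → mulG g (S t ρ ++ r) = S t ρ' ++ r := by
  cases g
  case b =>
    exact ⟨(false, .b) :: ρ, fun h => Mk_cons.2 (Or.inr h), fun t r _ => rfl⟩
  case x k =>
    exact ⟨(false, .x k) :: ρ, fun h => Mk_cons.2 (Or.inr h), fun t r _ => rfl⟩
  case y k =>
    exact ⟨(false, .y k) :: ρ, fun h => Mk_cons.2 (Or.inr h), fun t r _ => rfl⟩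
  case a =>
    by_cases hfx : fX (S 0 ρ ++ sfx em z)
    · refine ⟨ρ, fun h => h, fun t r hr => ?_⟩
      have h2 : fX (S t ρ ++ r) := fX_transfer (trr hr) (tside hMk hr) hfx
      rw [mulG_a, mA_fX h2]
    · by_cases hfy : fY (S 0 ρ ++ sfx em z)
      · obtain ⟨n, tt, hw⟩ := hfy
        rcases ρ with _ | ⟨⟨m0, g0⟩, _ | ⟨⟨m1, g1⟩, ρ2⟩⟩
        · cases em
          · simp [S_nil, sfx] at hw
          · exact absurd (hMk rfl) not_Mk_nil
        · simp only [S_cons, S_nil, List.nil_append, List.cons_append] at hw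
          injection hw with hb hr2
          cases em
          · simp [sfx] at hr2
          · have := sub_eq_b hb
            simp only at this; subst this
            rcases Mk_cons.1 (hMk rfl) with ⟨-, hxy⟩ | hM'
            · exact absurd hxy not_isXY_b
            · exact absurd hM' not_Mk_nil
        · simp only [S_cons, List.cons_append] at hw
          injection hw with hb hw2
          injection hw2 with hy hw3
          have hb' := sub_eq_b hb
          obtain ⟨n', hn'⟩ := sub_eq_y hy
          simp only at hb' hn'
          subst hb'; subst hn'
          have hzero := sub_zero (m1, Gen.y n')
          simp only at hzero
          rw [hzero] at hy
          injection hy with hy'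
          subst hy'
          refine ⟨(m0, .b) :: (m1, .y (n' + 1)) :: ρ2, ?_, ?_⟩
          · intro h
            rcases Mk_cons.1 h with h0 | h0
            · exact Mk_cons.2 (Or.inl h0)
            rcases Mk_cons.1 h0 with h1 | h1
            · exact Mk_cons.2 (Or.inr (Mk_cons.2 (Or.inl ⟨h1.1, n' + 1, Or.inr rfl⟩)))
            · exact Mk_cons.2 (Or.inr (Mk_cons.2 (Or.inr h1)))
          · intro t r hr
            rw [mulG_a]
            simp only [S_cons, List.cons_append, sub_b, sub_y]
            show mA (.b :: .y (n' + cond m1 t 0) :: (S t ρ2 ++ r)) = _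
            simp only [mA, List.cons.injEq, Gen.y.injEq, true_and, and_true]
            omega
      · refine ⟨(false, .a) :: ρ, fun h => Mk_cons.2 (Or.inr h), fun t r hr => ?_⟩
        rw [mulG_a]
        have h1 : ¬ fX (S t ρ ++ r) := fun hc =>
          hfx (fX_transfer (trr hr).symm (tside' hMk hr) hc)
        have h2 : ¬ fY (S t ρ ++ r) := fun hc =>
          hfy (fY_transfer (trr hr).symm (tside' hMk hr) hc)
        rw [mA_nf h1 h2]; rfl
  case c =>
    by_cases hfy : fY (S 0 ρ ++ sfx em z)
    · refine ⟨ρ, fun h => h, fun t r hr => ?_⟩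
      have h2 : fY (S t ρ ++ r) := fY_transfer (trr hr) (tside hMk hr) hfy
      rw [mulG_c, mC_fY h2]
    · by_cases hfx : fX (S 0 ρ ++ sfx em z)
      · obtain ⟨n, tt, hw⟩ := hfx
        rcases ρ with _ | ⟨⟨m0, g0⟩, _ | ⟨⟨m1, g1⟩, ρ2⟩⟩
        · cases em
          · simp [S_nil, sfx] at hw
          · exact absurd (hMk rfl) not_Mk_nil
        · simp only [S_cons, S_nil, List.nil_append, List.cons_append] at hw
          injection hw with hb hr2
          cases em
          · simp [sfx] at hr2
          · have := sub_eq_b hb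
            simp only at this; subst this
            rcases Mk_cons.1 (hMk rfl) with ⟨-, hxy⟩ | hM'
            · exact absurd hxy not_isXY_b
            · exact absurd hM' not_Mk_nil
        · simp only [S_cons, List.cons_append] at hw
          injection hw with hb hw2
          injection hw2 with hy hw3
          have hb' := sub_eq_b hb
          obtain ⟨n', hn'⟩ := sub_eq_x hy
          simp only at hb' hn'
          subst hb'; subst hn'
          have hzero := sub_zero (m1, Gen.x n')
          simp only at hzero
          rw [hzero] at hy
          injection hy with hy'
          subst hy'
          refine ⟨(m0, .b) :: (m1, .x (n' + 1)) :: ρ2, ?_, ?_⟩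
          · intro h
            rcases Mk_cons.1 h with h0 | h0
            · exact Mk_cons.2 (Or.inl h0)
            rcases Mk_cons.1 h0 with h1 | h1
            · exact Mk_cons.2 (Or.inr (Mk_cons.2 (Or.inl ⟨h1.1, n' + 1, Or.inl rfl⟩)))
            · exact Mk_cons.2 (Or.inr (Mk_cons.2 (Or.inr h1)))
          · intro t r hr
            rw [mulG_c]
            simp only [S_cons, List.cons_append, sub_b, sub_x]
            show mC (.b :: .x (n' + cond m1 t 0) :: (S t ρ2 ++ r)) = _
            simp only [mC, List.cons.injEq, Gen.x.injEq, true_and, and_true]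
            omega
      · refine ⟨(false, .c) :: ρ, fun h => Mk_cons.2 (Or.inr h), fun t r hr => ?_⟩
        rw [mulG_c]
        have h1 : ¬ fX (S t ρ ++ r) := fun hc =>
          hfx (fX_transfer (trr hr).symm (tside' hMk hr) hc)
        have h2 : ¬ fY (S t ρ ++ r) := fun hc =>
          hfy (fY_transfer (trr hr).symm (tside' hMk hr) hc)
        rw [mC_nf h1 h2]; rfl
  case d =>
    by_cases hf : fXz (S 0 ρ ++ sfx em z)
    · refine ⟨ρ, fun h => h, fun t r hr => ?_⟩
      have h2 : fXz (S t ρ ++ r) := fXz_transfer (trr hr) (tside hMk hr) hf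
      rw [mulG_d, mD_fXz h2]
    · refine ⟨(false, .d) :: ρ, fun h => Mk_cons.2 (Or.inr h), fun t r hr => ?_⟩
      rw [mulG_d]
      have h1 : ¬ fXz (S t ρ ++ r) := fun hc =>
        hf (fXz_transfer (trr hr).symm (tside' hMk hr) hc)
      rw [mD_nf h1]; rfl
  case f =>
    by_cases hf : fYz (S 0 ρ ++ sfx em z)
    · refine ⟨ρ, fun h => h, fun t r hr => ?_⟩
      have h2 : fYz (S t ρ ++ r) := fYz_transfer (trr hr) (tside hMk hr) hf
      rw [mulG_f, mF_fYz h2]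
    · refine ⟨(false, .f) :: ρ, fun h => Mk_cons.2 (Or.inr h), fun t r hr => ?_⟩
      rw [mulG_f]
      have h1 : ¬ fYz (S t ρ ++ r) := fun hc =>
        hf (fYz_transfer (trr hr).symm (tside' hMk hr) hc)
      rw [mF_nf h1]; rfl

lemma tside2 {em : Bool} {z : Gen} {ρ : List MG} (hMk : em = true → Mk ρ) :
    Mk ρ ∨ (sfx em z = [] ∧ sfx em z = []) := by
  cases em
  · exact Or.inr ⟨rfl, rfl⟩
  · exact Or.inl (hMk rfl)

/-- Backward (inversion) step. -/
lemma stepB {e1 : ℤ} (he1 : e1 ≠ 0) (g : Gen) (em : Bool) (z : Gen) (ρ : List MG)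
    (u v : GW)
    (hu : mulG g u = S 0 ρ ++ sfx em z) (hv : mulG g v = S e1 ρ ++ sfx em z)
    (hne : em = true → u ≠ v) :
    ∃ ρ' : List MG, u = S 0 ρ' ++ sfx em z ∧ v = S e1 ρ' ++ sfx em z ∧
      ∀ (t : ℤ) (r : GW), (r = [] ↔ em = false) → mulG g (S t ρ' ++ r) = S t ρ ++ r := by
  have hMk : em = true → Mk ρ := by
    intro he
    have hSne : S 0 ρ ≠ S e1 ρ := by
      intro hc
      exact hne he (mulG_inj g (hu.trans (by rw [hc, ← hv])))
    exact mk_of_ne hSne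
  cases g
  case b =>
    have hu' : (Gen.b) :: u = S 0 ρ ++ sfx em z := hu
    have hv' : (Gen.b) :: v = S e1 ρ ++ sfx em z := hv
    rcases ρ with _ | ⟨⟨m0, g0⟩, ρ1⟩
    · cases em
      · simp [sfx, S_nil] at hu'
      · simp only [S_nil, List.nil_append, sfx, cond] at hu' hv'
        injection hu' with hz hu2
        injection hv' with _ hv2
        exact absurd (by rw [hu2, hv2]) (hne rfl)
    · simp only [S_cons, List.cons_append] at hu' hv'
      injection hu' with hb hu2
      have hg0 : g0 = .b := sub_eq_b hb.symm
      subst hg0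
      rw [sub_b] at hv'
      injection hv' with _ hv2
      exact ⟨ρ1, hu2, hv2, fun t r hr => by
        show (Gen.b) :: (S t ρ1 ++ r) = S t ((m0, Gen.b) :: ρ1) ++ r
        rw [S_cons, sub_b]; rfl⟩
  case x k =>
    have hu' : (Gen.x k) :: u = S 0 ρ ++ sfx em z := hu
    have hv' : (Gen.x k) :: v = S e1 ρ ++ sfx em z := hv
    rcases ρ with _ | ⟨⟨m0, g0⟩, ρ1⟩
    · cases em
      · simp [sfx, S_nil] at hu'
      · simp only [S_nil, List.nil_append, sfx, cond] at hu' hv'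
        injection hu' with hz hu2
        injection hv' with _ hv2
        exact absurd (by rw [hu2, hv2]) (hne rfl)
    · simp only [S_cons, List.cons_append] at hu' hv'
      injection hu' with hx hu2
      obtain ⟨n', hn'⟩ := sub_eq_x hx.symm
      simp only at hn'
      subst hn'
      have h0 := sub_zero (m0, Gen.x n')
      simp only at h0
      rw [h0] at hx
      injection hx with hk
      subst hk
      rw [sub_x] at hv'
      injection hv' with hk2 hv2
      have hm0 : m0 = false := by
        cases m0
        · rfl
        · exfalso
          injection hk2 with hk3
          simp only [cond] at hk3
          omega
      subst hm0
      refine ⟨ρ1, hu2, hv2, fun t r hr => ?_⟩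
      show (Gen.x k) :: (S t ρ1 ++ r) = S t ((false, Gen.x k) :: ρ1) ++ r
      rw [S_cons]; rfl
  case y k =>
    have hu' : (Gen.y k) :: u = S 0 ρ ++ sfx em z := hu
    have hv' : (Gen.y k) :: v = S e1 ρ ++ sfx em z := hv
    rcases ρ with _ | ⟨⟨m0, g0⟩, ρ1⟩
    · cases em
      · simp [sfx, S_nil] at hu'
      · simp only [S_nil, List.nil_append, sfx, cond] at hu' hv'
        injection hu' with hz hu2
        injection hv' with _ hv2
        exact absurd (by rw [hu2, hv2]) (hne rfl)
    · simp only [S_cons, List.cons_append] at hu' hv'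
      injection hu' with hx hu2
      obtain ⟨n', hn'⟩ := sub_eq_y hx.symm
      simp only at hn'
      subst hn'
      have h0 := sub_zero (m0, Gen.y n')
      simp only at h0
      rw [h0] at hx
      injection hx with hk
      subst hk
      rw [sub_y] at hv'
      injection hv' with hk2 hv2
      have hm0 : m0 = false := by
        cases m0
        · rfl
        · exfalso
          injection hk2 with hk3
          simp only [cond] at hk3
          omega
      subst hm0
      refine ⟨ρ1, hu2, hv2, fun t r hr => ?_⟩
      show (Gen.y k) :: (S t ρ1 ++ r) = S t ((false, Gen.y k) :: ρ1) ++ r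
      rw [S_cons]; rfl
  case a =>
    rw [mulG_a] at hu hv
    by_cases hfx : fX u
    · obtain ⟨n, tu, rfl⟩ := hfx
      rw [mA_fX ⟨n, tu, rfl⟩] at hu
      have hW1 : fX (S e1 ρ ++ sfx em z) :=
        fX_transfer Iff.rfl (tside2 hMk) (by rw [← hu]; exact ⟨n, tu, rfl⟩)
      by_cases hfxv : fX v
      · rw [mA_fX hfxv] at hv
        refine ⟨ρ, hu, hv, fun t r hr => ?_⟩
        have h2 : fX (S t ρ ++ r) := fX_transfer (trr hr) (tside hMk hr) (by rw [← hu]; exact ⟨n, tu, rfl⟩)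
        rw [mulG_a, mA_fX h2]
      · exfalso
        obtain ⟨n2, t2, hW1e⟩ := hW1
        rw [hW1e] at hv
        by_cases hfyv : fY v
        · obtain ⟨m, tv, rfl⟩ := hfyv
          rw [show mA (.b :: .y m :: tv) = .b :: .y (m+1) :: tv from rfl] at hv
          injection hv with h1 h2
          injection h2 with h3
          cases h3
        · rw [mA_nf hfxv hfyv] at hv
          injection hv with h3
          cases h3
    · by_cases hfy : fY u
      · obtain ⟨n, tu, rfl⟩ := hfy
        rw [show mA (.b :: .y n :: tu) = .b :: .y (n+1) :: tu from rfl] at hu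
        rcases ρ with _ | ⟨⟨m0, g0⟩, _ | ⟨⟨m1, g1⟩, ρ2⟩⟩
        · cases em
          · simp [sfx, S_nil] at hu
          · exact absurd (hMk rfl) not_Mk_nil
        · simp only [S_cons, S_nil, List.nil_append, List.cons_append] at hu
          injection hu with hb hr2
          cases em
          · simp [sfx, S_nil] at hr2
          · have hg0 : g0 = .b := sub_eq_b hb.symm
            subst hg0
            rcases Mk_cons.1 (hMk rfl) with ⟨-, hxy⟩ | hM'
            · exact absurd hxy not_isXY_b
            · exact absurd hM' not_Mk_nil
        · simp only [S_cons, List.cons_append] at hu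
          injection hu with hb hu2
          injection hu2 with hy hu3
          have hg0 : g0 = .b := sub_eq_b hb.symm
          subst hg0
          have hz1 := sub_zero (m1, g1)
          simp only at hz1
          rw [hz1] at hy
          subst hy
          have hvW : S e1 ((m0, .b) :: (m1, .y (n+1)) :: ρ2) ++ sfx em z =
              .b :: .y (n + 1 + cond m1 e1 0) :: (S e1 ρ2 ++ sfx em z) := by
            simp only [S_cons, List.cons_append, sub_b, sub_y]
          rw [hvW] at hv
          by_cases hfxv : fX v
          · exfalso
            obtain ⟨nn, tt, rfl⟩ := hfxv
            rw [mA_fX ⟨nn, tt, rfl⟩] at hv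
            injection hv with h1 h2
            injection h2 with h3
            cases h3
          · by_cases hfyv : fY v
            · obtain ⟨m, tv, rfl⟩ := hfyv
              rw [show mA (.b :: .y m :: tv) = .b :: .y (m+1) :: tv from rfl] at hv
              injection hv with h1 h2
              injection h2 with hm htv
              injection hm with hm
              refine ⟨(m0, .b) :: (m1, .y n) :: ρ2, ?_, ?_, ?_⟩
              · simp only [S_cons, List.cons_append, sub_b, sub_y]
                rw [hu3]
                cases m1 <;> simp
              · simp only [S_cons, List.cons_append, sub_b, sub_y]
                rw [htv]
                simp only [List.cons.injEq, Gen.y.injEq, true_and, and_true]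
                omega
              · intro t r hr
                rw [mulG_a]
                simp only [S_cons, List.cons_append, sub_b, sub_y]
                show mA (.b :: .y (n + cond m1 t 0) :: (S t ρ2 ++ r)) = _
                simp only [mA, List.cons.injEq, Gen.y.injEq, true_and, and_true]
                omega
            · exfalso
              rw [mA_nf hfxv hfyv] at hv
              injection hv with h3
              cases h3
      · rw [mA_nf hfx hfy] at hu
        rcases ρ with _ | ⟨⟨m0, g0⟩, ρ1⟩
        · cases em
          · simp [sfx, S_nil] at hu
          · simp only [S_nil, List.nil_append, sfx, cond] at hu hv
            injection hu with hz hu2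
            subst hu2
            rw [← hz] at hv
            by_cases hfxv : fX v
            · obtain ⟨nn, tt, rfl⟩ := hfxv
              rw [mA_fX ⟨nn, tt, rfl⟩] at hv
              injection hv with h3
              cases h3
            · by_cases hfyv : fY v
              · obtain ⟨m, tv, rfl⟩ := hfyv
                rw [show mA (.b :: .y m :: tv) = .b :: .y (m+1) :: tv from rfl] at hv
                injection hv with h3
                cases h3
              · rw [mA_nf hfxv hfyv] at hv
                injection hv with _ hv2
                exact absurd (by rw [hv2]) (hne rfl)
        · simp only [S_cons, List.cons_append] at hu
          injection hu with ha hu2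
          have hg0 : g0 = .a := sub_eq_a ha.symm
          subst hg0
          have hMk1 : em = true → Mk ρ1 := by
            intro he
            rcases Mk_cons.1 (hMk he) with ⟨-, hxy⟩ | h
            · exact absurd hxy not_isXY_a
            · exact h
          have hvW : S e1 ((m0, .a) :: ρ1) ++ sfx em z = .a :: (S e1 ρ1 ++ sfx em z) := by
            simp only [S_cons, List.cons_append, sub_a]
          rw [hvW] at hv
          by_cases hfxv : fX v
          · exfalso
            obtain ⟨nn, tt, rfl⟩ := hfxv
            rw [mA_fX ⟨nn, tt, rfl⟩] at hv
            injection hv with h3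
            cases h3
          · by_cases hfyv : fY v
            · exfalso
              obtain ⟨m, tv, rfl⟩ := hfyv
              rw [show mA (.b :: .y m :: tv) = .b :: .y (m+1) :: tv from rfl] at hv
              injection hv with h3
              cases h3
            · rw [mA_nf hfxv hfyv] at hv
              injection hv with _ hv2
              refine ⟨ρ1, hu2, hv2, fun t r hr => ?_⟩
              rw [mulG_a]
              have h1 : ¬ fX (S t ρ1 ++ r) := by
                intro hc
                have h4 : fX (S 0 ρ1 ++ sfx em z) := fX_transfer (trr hr).symm (tside' hMk1 hr) hc
                rw [← hu2] at h4
                exact hfx h4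
              have h2 : ¬ fY (S t ρ1 ++ r) := by
                intro hc
                have h4 : fY (S 0 ρ1 ++ sfx em z) := fY_transfer (trr hr).symm (tside' hMk1 hr) hc
                rw [← hu2] at h4
                exact hfy h4
              rw [mA_nf h1 h2]
              simp only [S_cons, List.cons_append, sub_a]
  case c =>
    rw [mulG_c] at hu hv
    by_cases hfy : fY u
    · obtain ⟨n, tu, rfl⟩ := hfy
      rw [mC_fY ⟨n, tu, rfl⟩] at hu
      have hW1 : fY (S e1 ρ ++ sfx em z) :=
        fY_transfer Iff.rfl (tside2 hMk) (by rw [← hu]; exact ⟨n, tu, rfl⟩)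
      by_cases hfyv : fY v
      · rw [mC_fY hfyv] at hv
        refine ⟨ρ, hu, hv, fun t r hr => ?_⟩
        have h2 : fY (S t ρ ++ r) := fY_transfer (trr hr) (tside hMk hr) (by rw [← hu]; exact ⟨n, tu, rfl⟩)
        rw [mulG_c, mC_fY h2]
      · exfalso
        obtain ⟨n2, t2, hW1e⟩ := hW1
        rw [hW1e] at hv
        by_cases hfxv : fX v
        · obtain ⟨m, tv, rfl⟩ := hfxv
          rw [show mC (.b :: .x m :: tv) = .b :: .x (m+1) :: tv from rfl] at hv
          injection hv with h1 h2
          injection h2 with h3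
          cases h3
        · rw [mC_nf hfxv hfyv] at hv
          injection hv with h3
          cases h3
    · by_cases hfx : fX u
      · obtain ⟨n, tu, rfl⟩ := hfx
        rw [show mC (.b :: .x n :: tu) = .b :: .x (n+1) :: tu from rfl] at hu
        rcases ρ with _ | ⟨⟨m0, g0⟩, _ | ⟨⟨m1, g1⟩, ρ2⟩⟩
        · cases em
          · simp [sfx, S_nil] at hu
          · exact absurd (hMk rfl) not_Mk_nil
        · simp only [S_cons, S_nil, List.nil_append, List.cons_append] at hu
          injection hu with hb hr2
          cases em
          · simp [sfx, S_nil] at hr2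
          · have hg0 : g0 = .b := sub_eq_b hb.symm
            subst hg0
            rcases Mk_cons.1 (hMk rfl) with ⟨-, hxy⟩ | hM'
            · exact absurd hxy not_isXY_b
            · exact absurd hM' not_Mk_nil
        · simp only [S_cons, List.cons_append] at hu
          injection hu with hb hu2
          injection hu2 with hy hu3
          have hg0 : g0 = .b := sub_eq_b hb.symm
          subst hg0
          have hz1 := sub_zero (m1, g1)
          simp only at hz1
          rw [hz1] at hy
          subst hy
          have hvW : S e1 ((m0, .b) :: (m1, .x (n+1)) :: ρ2) ++ sfx em z =
              .b :: .x (n + 1 + cond m1 e1 0) :: (S e1 ρ2 ++ sfx em z) := by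
            simp only [S_cons, List.cons_append, sub_b, sub_x]
          rw [hvW] at hv
          by_cases hfyv : fY v
          · exfalso
            obtain ⟨nn, tt, rfl⟩ := hfyv
            rw [mC_fY ⟨nn, tt, rfl⟩] at hv
            injection hv with h1 h2
            injection h2 with h3
            cases h3
          · by_cases hfxv : fX v
            · obtain ⟨m, tv, rfl⟩ := hfxv
              rw [show mC (.b :: .x m :: tv) = .b :: .x (m+1) :: tv from rfl] at hv
              injection hv with h1 h2
              injection h2 with hm htv
              injection hm with hm
              refine ⟨(m0, .b) :: (m1, .x n) :: ρ2, ?_, ?_, ?_⟩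
              · simp only [S_cons, List.cons_append, sub_b, sub_x]
                rw [hu3]
                cases m1 <;> simp
              · simp only [S_cons, List.cons_append, sub_b, sub_x]
                rw [htv]
                simp only [List.cons.injEq, Gen.x.injEq, true_and, and_true]
                omega
              · intro t r hr
                rw [mulG_c]
                simp only [S_cons, List.cons_append, sub_b, sub_x]
                show mC (.b :: .x (n + cond m1 t 0) :: (S t ρ2 ++ r)) = _
                simp only [mC, List.cons.injEq, Gen.x.injEq, true_and, and_true]
                omega
            · exfalso
              rw [mC_nf hfxv hfyv] at hv
              injection hv with h3
              cases h3
      · rw [mC_nf hfx hfy] at hu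
        rcases ρ with _ | ⟨⟨m0, g0⟩, ρ1⟩
        · cases em
          · simp [sfx, S_nil] at hu
          · simp only [S_nil, List.nil_append, sfx, cond] at hu hv
            injection hu with hz hu2
            subst hu2
            rw [← hz] at hv
            by_cases hfxv : fX v
            · obtain ⟨nn, tt, rfl⟩ := hfxv
              rw [show mC (.b :: .x nn :: tt) = .b :: .x (nn+1) :: tt from rfl] at hv
              injection hv with h3
              cases h3
            · by_cases hfyv : fY v
              · obtain ⟨m, tv, rfl⟩ := hfyv
                rw [mC_fY ⟨m, tv, rfl⟩] at hv
                injection hv with h3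
                cases h3
              · rw [mC_nf hfxv hfyv] at hv
                injection hv with _ hv2
                exact absurd (by rw [hv2]) (hne rfl)
        · simp only [S_cons, List.cons_append] at hu
          injection hu with ha hu2
          have hg0 : g0 = .c := sub_eq_c ha.symm
          subst hg0
          have hMk1 : em = true → Mk ρ1 := by
            intro he
            rcases Mk_cons.1 (hMk he) with ⟨-, hxy⟩ | h
            · exact absurd hxy not_isXY_c
            · exact h
          have hvW : S e1 ((m0, .c) :: ρ1) ++ sfx em z = .c :: (S e1 ρ1 ++ sfx em z) := by
            simp only [S_cons, List.cons_append, sub_c]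
          rw [hvW] at hv
          by_cases hfxv : fX v
          · exfalso
            obtain ⟨nn, tt, rfl⟩ := hfxv
            rw [show mC (.b :: .x nn :: tt) = .b :: .x (nn+1) :: tt from rfl] at hv
            injection hv with h3
            cases h3
          · by_cases hfyv : fY v
            · exfalso
              obtain ⟨m, tv, rfl⟩ := hfyv
              rw [mC_fY ⟨m, tv, rfl⟩] at hv
              injection hv with h3
              cases h3
            · rw [mC_nf hfxv hfyv] at hv
              injection hv with _ hv2
              refine ⟨ρ1, hu2, hv2, fun t r hr => ?_⟩
              rw [mulG_c]
              have h1 : ¬ fX (S t ρ1 ++ r) := by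
                intro hc
                have h4 : fX (S 0 ρ1 ++ sfx em z) := fX_transfer (trr hr).symm (tside' hMk1 hr) hc
                rw [← hu2] at h4
                exact hfx h4
              have h2 : ¬ fY (S t ρ1 ++ r) := by
                intro hc
                have h4 : fY (S 0 ρ1 ++ sfx em z) := fY_transfer (trr hr).symm (tside' hMk1 hr) hc
                rw [← hu2] at h4
                exact hfy h4
              rw [mC_nf h1 h2]
              simp only [S_cons, List.cons_append, sub_c]
  case d =>
    rw [mulG_d] at hu hv
    by_cases hf : fXz u
    · obtain ⟨n, z', tu, rfl⟩ := hf
      rw [mD_fXz ⟨n, z', tu, rfl⟩] at hu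
      have hW1 : fXz (S e1 ρ ++ sfx em z) :=
        fXz_transfer Iff.rfl (tside2 hMk) (by rw [← hu]; exact ⟨n, z', tu, rfl⟩)
      by_cases hfv : fXz v
      · rw [mD_fXz hfv] at hv
        refine ⟨ρ, hu, hv, fun t r hr => ?_⟩
        have h2 : fXz (S t ρ ++ r) := fXz_transfer (trr hr) (tside hMk hr) (by rw [← hu]; exact ⟨n, z', tu, rfl⟩)
        rw [mulG_d, mD_fXz h2]
      · exfalso
        obtain ⟨n2, z2, t2, hW1e⟩ := hW1
        rw [hW1e] at hv
        rw [mD_nf hfv] at hv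
        injection hv with h3
        cases h3
    · rw [mD_nf hf] at hu
      rcases ρ with _ | ⟨⟨m0, g0⟩, ρ1⟩
      · cases em
        · simp [sfx, S_nil] at hu
        · simp only [S_nil, List.nil_append, sfx, cond] at hu hv
          injection hu with hz hu2
          subst hu2
          rw [← hz] at hv
          by_cases hfv : fXz v
          · obtain ⟨nn, zz, tt, rfl⟩ := hfv
            rw [mD_fXz ⟨nn, zz, tt, rfl⟩] at hv
            injection hv with h3
            cases h3
          · rw [mD_nf hfv] at hv
            injection hv with _ hv2
            exact absurd (by rw [hv2]) (hne rfl)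
      · simp only [S_cons, List.cons_append] at hu
        injection hu with ha hu2
        have hg0 : g0 = .d := sub_eq_d ha.symm
        subst hg0
        have hMk1 : em = true → Mk ρ1 := by
          intro he
          rcases Mk_cons.1 (hMk he) with ⟨-, hxy⟩ | h
          · exact absurd hxy not_isXY_d
          · exact h
        have hvW : S e1 ((m0, .d) :: ρ1) ++ sfx em z = .d :: (S e1 ρ1 ++ sfx em z) := by
          simp only [S_cons, List.cons_append, sub_d]
        rw [hvW] at hv
        by_cases hfv : fXz v
        · exfalso
          obtain ⟨nn, zz, tt, rfl⟩ := hfv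
          rw [mD_fXz ⟨nn, zz, tt, rfl⟩] at hv
          injection hv with h3
          cases h3
        · rw [mD_nf hfv] at hv
          injection hv with _ hv2
          refine ⟨ρ1, hu2, hv2, fun t r hr => ?_⟩
          rw [mulG_d]
          have h1 : ¬ fXz (S t ρ1 ++ r) := by
            intro hc
            have h4 : fXz (S 0 ρ1 ++ sfx em z) := fXz_transfer (trr hr).symm (tside' hMk1 hr) hc
            rw [← hu2] at h4
            exact hf h4
          rw [mD_nf h1]
          simp only [S_cons, List.cons_append, sub_d]
  case f =>
    rw [mulG_f] at hu hv
    by_cases hf : fYz u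
    · obtain ⟨n, z', tu, rfl⟩ := hf
      rw [mF_fYz ⟨n, z', tu, rfl⟩] at hu
      have hW1 : fYz (S e1 ρ ++ sfx em z) :=
        fYz_transfer Iff.rfl (tside2 hMk) (by rw [← hu]; exact ⟨n, z', tu, rfl⟩)
      by_cases hfv : fYz v
      · rw [mF_fYz hfv] at hv
        refine ⟨ρ, hu, hv, fun t r hr => ?_⟩
        have h2 : fYz (S t ρ ++ r) := fYz_transfer (trr hr) (tside hMk hr) (by rw [← hu]; exact ⟨n, z', tu, rfl⟩)
        rw [mulG_f, mF_fYz h2]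
      · exfalso
        obtain ⟨n2, z2, t2, hW1e⟩ := hW1
        rw [hW1e] at hv
        rw [mF_nf hfv] at hv
        injection hv with h3
        cases h3
    · rw [mF_nf hf] at hu
      rcases ρ with _ | ⟨⟨m0, g0⟩, ρ1⟩
      · cases em
        · simp [sfx, S_nil] at hu
        · simp only [S_nil, List.nil_append, sfx, cond] at hu hv
          injection hu with hz hu2
          subst hu2
          rw [← hz] at hv
          by_cases hfv : fYz v
          · obtain ⟨nn, zz, tt, rfl⟩ := hfv
            rw [mF_fYz ⟨nn, zz, tt, rfl⟩] at hv
            injection hv with h3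
            cases h3
          · rw [mF_nf hfv] at hv
            injection hv with _ hv2
            exact absurd (by rw [hv2]) (hne rfl)
      · simp only [S_cons, List.cons_append] at hu
        injection hu with ha hu2
        have hg0 : g0 = .f := sub_eq_f ha.symm
        subst hg0
        have hMk1 : em = true → Mk ρ1 := by
          intro he
          rcases Mk_cons.1 (hMk he) with ⟨-, hxy⟩ | h
          · exact absurd hxy not_isXY_f
          · exact h
        have hvW : S e1 ((m0, .f) :: ρ1) ++ sfx em z = .f :: (S e1 ρ1 ++ sfx em z) := by
          simp only [S_cons, List.cons_append, sub_f]
        rw [hvW] at hv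
        by_cases hfv : fYz v
        · exfalso
          obtain ⟨nn, zz, tt, rfl⟩ := hfv
          rw [mF_fYz ⟨nn, zz, tt, rfl⟩] at hv
          injection hv with h3
          cases h3
        · rw [mF_nf hfv] at hv
          injection hv with _ hv2
          refine ⟨ρ1, hu2, hv2, fun t r hr => ?_⟩
          rw [mulG_f]
          have h1 : ¬ fYz (S t ρ1 ++ r) := by
            intro hc
            have h4 : fYz (S 0 ρ1 ++ sfx em z) := fYz_transfer (trr hr).symm (tside' hMk1 hr) hc
            rw [← hu2] at h4
            exact hf h4
          rw [mF_nf h1]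
          simp only [S_cons, List.cons_append, sub_f]

lemma actF (Q : GW) (em : Bool) (z : Gen) (ρ : List MG) (hMk : em = true → Mk ρ) :
    ∃ ρ' : List MG, (Mk ρ → Mk ρ') ∧
      ∀ (t : ℤ) (r : GW), (r = [] ↔ em = false) → act Q (S t ρ ++ r) = S t ρ' ++ r := by
  induction Q with
  | nil => exact ⟨ρ, fun h => h, fun t r _ => rfl⟩
  | cons g Q ih =>
      obtain ⟨ρ1, hM1, h1⟩ := ih
      obtain ⟨ρ2, hM2, h2⟩ := stepF g em z ρ1 (fun he => hM1 (hMk he))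
      exact ⟨ρ2, fun h => hM2 (hM1 h), fun t r hr => by
        rw [act_cons, h1 t r hr, h2 t r hr]⟩

lemma actB {e1 : ℤ} (he1 : e1 ≠ 0) (Q : GW) (em : Bool) (z : Gen) (ρ : List MG)
    (u v : GW)
    (hu : act Q u = S 0 ρ ++ sfx em z) (hv : act Q v = S e1 ρ ++ sfx em z)
    (hne : em = true → u ≠ v) :
    ∃ ρ', u = S 0 ρ' ++ sfx em z ∧ v = S e1 ρ' ++ sfx em z ∧
      ∀ (t : ℤ) (r : GW), (r = [] ↔ em = false) → act Q (S t ρ' ++ r) = S t ρ ++ r := by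
  induction Q generalizing ρ with
  | nil => exact ⟨ρ, hu, hv, fun t r _ => rfl⟩
  | cons g Q ih =>
      rw [act_cons] at hu hv
      have hne' : em = true → act Q u ≠ act Q v := fun he hc => hne he (act_inj Q hc)
      obtain ⟨ρ1, hu1, hv1, h1⟩ := stepB he1 g em z ρ (act Q u) (act Q v) hu hv hne'
      obtain ⟨ρ', hu', hv', h2⟩ := ih ρ1 hu1 hv1
      exact ⟨ρ', hu', hv', fun t r hr => by rw [act_cons, h2 t r hr, h1 t r hr]⟩

lemma PChain {e1 : ℤ} (he1 : e1 ≠ 0) (em : Bool) (z : Gen) :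
    ∀ (l : List (R × R)) (u uN v vN : R) (ρ : List MG),
      Runs l u uN → Runs l v vN → (em = true → u ≠ v) →
      NF u = S 0 ρ ++ sfx em z → NF v = S e1 ρ ++ sfx em z →
      ∃ ρN, NF uN = S 0 ρN ++ sfx em z ∧ NF vN = S e1 ρN ++ sfx em z ∧
        (em = true → uN ≠ vN) ∧
        ∀ (t : ℤ) (r : GW), (r = [] ↔ em = false) →
          Runs l (qR (FreeMonoid.ofList (S t ρ ++ r))) (qR (FreeMonoid.ofList (S t ρN ++ r))) := by
  intro l
  induction l with
  | nil =>
      intro u uN v vN ρ hru hrv hne hNu hNv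
      cases hru; cases hrv
      exact ⟨ρ, hNu, hNv, hne, fun t r _ => Runs.nil _⟩
  | cons pq l ih =>
      intro u uN v vN ρ hru hrv hne hNu hNv
      obtain ⟨p, q⟩ := pq
      cases hru with
      | @cons _ _ u' _ _ _ hqu hru' =>
      cases hrv with
      | @cons _ _ v' _ _ _ hqv hrv' =>
      have hMk : em = true → Mk ρ := by
        intro he
        have hNe : NF u ≠ NF v := fun hc => hne he (NF_inj hc)
        rw [hNu, hNv] at hNe
        exact mk_of_ne (fun hc => hNe (by rw [hc]))
      obtain ⟨ρh, hMh, hF⟩ := actF (NF p) em z ρ hMk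
      have hNpu : NF (p * u) = S 0 ρh ++ sfx em z := by
        rw [NF_mul, hNu, hF 0 (sfx em z) (sfx_nil_iff em z)]
      have hNpv : NF (p * v) = S e1 ρh ++ sfx em z := by
        rw [NF_mul, hNv, hF e1 (sfx em z) (sfx_nil_iff em z)]
      have hqu' : act (NF q) (NF u') = S 0 ρh ++ sfx em z := by
        rw [← NF_mul, hqu, hNpu]
      have hqv' : act (NF q) (NF v') = S e1 ρh ++ sfx em z := by
        rw [← NF_mul, hqv, hNpv]
      have hneuv' : em = true → u' ≠ v' := by
        intro he hc
        apply hne he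
        apply left_cancel (a := p)
        rw [← hqu, ← hqv, hc]
      have hne' : em = true → NF u' ≠ NF v' := fun he hc => hneuv' he (NF_inj hc)
      obtain ⟨ρ1, hu1, hv1, hB⟩ := actB he1 (NF q) em z ρh (NF u') (NF v') hqu' hqv' hne'
      obtain ⟨ρN, hN1, hN2, hN3, hRuns⟩ := ih u' uN v' vN ρ1 hru' hrv' hneuv' hu1 hv1
      refine ⟨ρN, hN1, hN2, hN3, fun t r hr => ?_⟩
      refine Runs.cons (u := qR (FreeMonoid.ofList (S t ρ1 ++ r))) ?_ (hRuns t r hr)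
      rw [mulElem, mulElem, hB t r hr, hF t r hr]

lemma NF_gen (g : Gen) : NF (gen g) = [g] := by
  have h1 : gen g = qR (FreeMonoid.ofList [g]) := rfl
  rw [h1, NF_qR]
  show mulG g [] = [g]
  cases g <;> rfl

lemma NF_eq_nil {r : R} (h : NF r = []) : r = 1 := by
  have := retr r
  rw [h] at this
  exact this.symm.trans rfl

lemma act_ne_nil {Q : GW} (l : GW) (h : Q ≠ []) : act Q l ≠ [] := by
  rcases Q with _ | ⟨g, Q'⟩
  · exact absurd rfl h
  · exact mulG_ne_nil g (act Q' l)

lemma hdom_some {h : R → Option R} {l : List (R × R)}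
    (hl : h = l.foldl (fun acc p => pcomp (pblock p) acc) pid) {s : R}
    (hs : s ∈ pdom h) : ∃ t, Runs l s t := by
  rcases ho : h s with _ | t
  · exact absurd ho hs
  · exact ⟨t, (hull_some hl s t).1 ho⟩

theorem cstar_stmt18' (h : R → Option R) (hh : InInvHull h) :
    ((∃ n₀ n₁ : ℤ, n₀ ≠ n₁ ∧
        h (gen (Gen.x n₀)) = some (gen (Gen.x n₀)) ∧
        gen (Gen.x n₁) ∈ pdom h) →
      ∀ n : ℤ, h (gen (Gen.x n)) = some (gen (Gen.x n))) ∧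
    (∀ z : Gen, (∃ n₀ n₁ : ℤ, n₀ ≠ n₁ ∧
        h (gen (Gen.x n₀) * gen z) = some (gen (Gen.x n₀) * gen z) ∧
        gen (Gen.x n₁) * gen z ∈ pdom h) →
      PFixes h {u : R | ∃ (n : ℤ) (w' t : R), w' ≠ 1 ∧ u = gen (Gen.x n) * w' * t}) := by
  obtain ⟨l, -, hfold⟩ := hh
  constructor
  · rintro ⟨n0, n1, hne01, hfix, hdom⟩ n
    have hru : Runs l (gen (.x n0)) (gen (.x n0)) := (hull_some hfold _ _).1 hfix
    obtain ⟨t1, hrv⟩ := hdom_some hfold hdom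
    have he1 : n1 - n0 ≠ 0 := fun hc => hne01 (by omega)
    have hNu : NF (gen (.x n0)) = S 0 [(true, Gen.x n0)] ++ sfx false Gen.a := by
      rw [NF_gen]
      simp [S, sub, shiftG, sfx]
    have hNv : NF (gen (.x n1)) = S (n1 - n0) [(true, Gen.x n0)] ++ sfx false Gen.a := by
      rw [NF_gen]
      simp [S, sub, shiftG, sfx]
    obtain ⟨ρN, hN1, hN2, -, hRuns⟩ :=
      PChain he1 false Gen.a l _ _ _ _ _ hru hrv (by simp) hNu hNv
    rw [NF_gen] at hN1
    simp only [sfx, cond, List.append_nil] at hN1 hN2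
    rcases ρN with _ | ⟨⟨m, gN⟩, ρN'⟩
    · cases hN1
    · rw [S_cons] at hN1
      injection hN1 with hg1 hg2
      have hρN' : ρN' = [] := by
        rcases ρN' with _ | ⟨p, ρ''⟩
        · rfl
        · rw [S_cons] at hg2; cases hg2
      subst hρN'
      have hz0 := sub_zero (m, gN)
      simp only at hz0
      rw [hz0] at hg1
      subst hg1
      cases m
      · -- unmarked: contradiction
        exfalso
        have hvN : NF t1 = [Gen.x n0] := by
          rw [hN2]
          simp [S, sub]
        have ht1e : t1 = gen (.x n0) := NF_inj (by rw [hvN, NF_gen])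
        rw [ht1e] at hrv
        have heq := runs_back_inj hru hrv
        have : NF (gen (Gen.x n0)) = NF (gen (Gen.x n1)) := by rw [heq]
        rw [NF_gen, NF_gen] at this
        injection this with h1 h2
        injection h1 with h1
        exact hne01 h1
      · -- marked
        have hr := hRuns (n - n0) [] (by simp)
        have hS1 : S (n - n0) [(true, Gen.x n0)] ++ ([] : GW) = [Gen.x n] := by
          simp [S, sub, shiftG]
        have hS2 : S (n - n0) [(true, Gen.x n0)] ++ ([] : GW) = [Gen.x n] := hS1
        rw [hS1] at hr
        have : qR (FreeMonoid.ofList [Gen.x n]) = gen (.x n) := rfl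
        rw [this] at hr
        exact (hull_some hfold _ _).2 hr
  · rintro z ⟨n0, n1, hne01, hfix, hdom⟩
    rintro uu ⟨n, w', tt, hw', rfl⟩
    have hru : Runs l (gen (.x n0) * gen z) (gen (.x n0) * gen z) :=
      (hull_some hfold _ _).1 hfix
    obtain ⟨t1, hrv⟩ := hdom_some hfold hdom
    have he1 : n1 - n0 ≠ 0 := fun hc => hne01 (by omega)
    have hNxz : ∀ k : ℤ, NF (gen (.x k) * gen z) = [Gen.x k, z] := by
      intro k
      rw [NF_mul, NF_gen, NF_gen]
      rfl
    have hNu : NF (gen (.x n0) * gen z) = S 0 [(true, Gen.x n0)] ++ sfx true z := by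
      rw [hNxz]
      simp [S, sub, shiftG, sfx]
    have hNv : NF (gen (.x n1) * gen z) = S (n1 - n0) [(true, Gen.x n0)] ++ sfx true z := by
      rw [hNxz]
      simp [S, sub, shiftG, sfx]
    have hneuv : gen (.x n0) * gen z ≠ gen (.x n1) * gen z := by
      intro hc
      have := congrArg NF hc
      rw [hNxz, hNxz] at this
      injection this with h1 h2
      injection h1 with h1
      exact hne01 h1
    obtain ⟨ρN, hN1, hN2, hNne, hRuns⟩ :=
      PChain he1 true z l _ _ _ _ _ hru hrv (fun _ => hneuv) hNu hNv
    rw [hNxz] at hN1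
    simp only [sfx, cond] at hN1 hN2
    rcases ρN with _ | ⟨⟨m, gN⟩, ρN'⟩
    · cases hN1
    · rw [S_cons, List.cons_append] at hN1
      injection hN1 with hg1 hg2
      have hρN' : ρN' = [] := by
        rcases ρN' with _ | ⟨p, ρ''⟩
        · rfl
        · rw [S_cons, List.cons_append] at hg2
          injection hg2 with _ hg3
          exact absurd hg3 (by
            intro hc
            have := congrArg List.length hc
            simp [S] at this)
      subst hρN'
      have hz0 := sub_zero (m, gN)
      simp only at hz0
      rw [hz0] at hg1
      subst hg1
      cases m
      · -- unmarked: vN = uN: contradiction with backward injectivity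
        exfalso
        have hvN : NF t1 = [Gen.x n0, z] := by
          rw [hN2]
          simp [S, sub]
        have ht1e : t1 = gen (.x n0) * gen z := NF_inj (by rw [hvN, hNxz])
        rw [ht1e] at hrv
        exact hneuv (runs_back_inj hru hrv)
      · -- marked: conclude
        set r : GW := NF (w' * tt) with hrdef
        have hrne : r ≠ [] := by
          rw [hrdef, NF_mul]
          apply act_ne_nil
          intro hc
          exact hw' (NF_eq_nil hc)
        have hcond : r = [] ↔ (true : Bool) = false := by
          simp [hrne]
        have hr := hRuns (n - n0) r hcond
        have hS1 : S (n - n0) [(true, Gen.x n0)] ++ r = Gen.x n :: r := by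
          simp [S, sub, shiftG]
        rw [hS1] at hr
        have hqRr : qR (FreeMonoid.ofList (Gen.x n :: r)) = gen (.x n) * w' * tt := by
          rw [qR_cons]
          rw [hrdef]
          rw [retr (w' * tt)]
          rw [mul_assoc]
        rw [hqRr] at hr
        exact (hull_some hfold _ _).2 hr


/-- Let `h ∈ I_ℓ(R)`.
(1) If `h` fixes some `x_{n₀}` and `dom h` contains `x_{n₁}` for some `n₁ ≠ n₀`, then
`h` fixes `x_n` for all `n ∈ ℤ`.
(2) If `z` is a generator, `h` fixes `x_{n₀}·z` and `dom h` contains `x_{n₁}·z` for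
some `n₁ ≠ n₀`, then `h` fixes the constructible ideal `⋃_{n, w' ≠ e} x_n w' R`
pointwise. -/
theorem cstar_stmt18 (h : R → Option R) (hh : InInvHull h) :
    ((∃ n₀ n₁ : ℤ, n₀ ≠ n₁ ∧
        h (gen (Gen.x n₀)) = some (gen (Gen.x n₀)) ∧
        gen (Gen.x n₁) ∈ pdom h) →
      ∀ n : ℤ, h (gen (Gen.x n)) = some (gen (Gen.x n))) ∧
    (∀ z : Gen, (∃ n₀ n₁ : ℤ, n₀ ≠ n₁ ∧
        h (gen (Gen.x n₀) * gen z) = some (gen (Gen.x n₀) * gen z) ∧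
        gen (Gen.x n₁) * gen z ∈ pdom h) →
      PFixes h {u : R | ∃ (n : ℤ) (w' t : R), w' ≠ 1 ∧ u = gen (Gen.x n) * w' * t}) := by
  exact cstar_stmt18' h hh

end SgC
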